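/- An element x = (x_n) ∈ ℓ∞ is a right-symmetric point if and only if |x_n| = ‖x‖ for every n ∈ ℕ. -/

import Mathlib

open ENNReal

/-- Birkhoff-James orthogonality in `ℓ∞`. -/
def BJInf {𝕂 : Type*} [RCLike 𝕂] (x y : lp (fun _ : ℕ => 𝕂) ∞) : Prop :=
  ∀ lam : 𝕂, ‖x‖ ≤ ‖x + lam • y‖

open RCLike ComplexConjugate in
private lemma coord_sq_bound {𝕂 : Type*} [RCLike 𝕂] {b w : 𝕂} {c d S : ℝ}
    (hb : ‖b‖ = c) (hbw : ‖b + w‖ ≤ d) (hw : ‖w‖ ≤ S) (hdc : d ≤ c) (hc : 0 < c) :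
    ‖w + (((c - d)/c : ℝ) : 𝕂) * b‖ ^ 2 ≤ S ^ 2 - (c - d) ^ 2 := by
  set t : ℝ := (c - d) / c with ht
  have hd0 : 0 ≤ d := le_trans (norm_nonneg _) hbw
  have ht0 : 0 ≤ t := div_nonneg (by linarith) hc.le
  have htc : t * c = c - d := by rw [ht]; field_simp
  have h1 : ‖w + (t : 𝕂) * b‖ ^ 2 = ‖w‖ ^ 2 + t ^ 2 * c ^ 2 + 2 * (t * re (w * conj b)) := by
    have e : conj ((t : 𝕂) * b) = (t : 𝕂) * conj b := by simp
    rw [← normSq_eq_def', normSq_add, normSq_mul, e,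
        show w * ((t : 𝕂) * conj b) = (t : 𝕂) * (w * conj b) by ring, re_ofReal_mul]
    simp only [normSq_eq_def', hb, RCLike.norm_ofReal, sq_abs]
  have h2 : re (w * conj b) ≤ c * d - c ^ 2 := by
    have e1 : re ((b + w) * conj b) ≤ c * d := by
      calc re ((b + w) * conj b) ≤ ‖(b + w) * conj b‖ := re_le_norm _
        _ = ‖b + w‖ * ‖b‖ := by rw [norm_mul, norm_conj]
        _ ≤ d * c := by
            apply mul_le_mul hbw (le_of_eq hb) (norm_nonneg _) hd0
        _ = c * d := mul_comm _ _
    have e2 : re (b * conj b) = c ^ 2 := by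
      rw [mul_conj, hb]
      rw [← RCLike.ofReal_pow]; exact ofReal_re _
    have : re ((b + w) * conj b) = re (b * conj b) + re (w * conj b) := by
      rw [add_mul, map_add]
    linarith
  have hS0 : 0 ≤ S := le_trans (norm_nonneg _) hw
  have hw2 : ‖w‖ ^ 2 ≤ S ^ 2 := by nlinarith [norm_nonneg w]
  rw [h1]
  nlinarith [sq_nonneg t, sq_nonneg (t*c)]


private lemma lp_apply_add {𝕂 : Type*} [RCLike 𝕂] (f g : lp (fun _ : ℕ => 𝕂) ∞) (n : ℕ) :
    (f + g) n = f n + g n := by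
  rw [lp.coeFn_add]; rfl

private lemma lp_apply_add_smul {𝕂 : Type*} [RCLike 𝕂] (f g : lp (fun _ : ℕ => 𝕂) ∞)
    (μ : 𝕂) (n : ℕ) : (f + μ • g) n = f n + μ * g n := by
  rw [lp_apply_add, lp.coeFn_smul]; rfl

private lemma lp_apply_sub {𝕂 : Type*} [RCLike 𝕂] (f g : lp (fun _ : ℕ => 𝕂) ∞) (n : ℕ) :
    (f - g) n = f n - g n := by
  rw [lp.coeFn_sub]; rfl

set_option maxHeartbeats 1000000 in
theorem ellInfty_rightSymmetric_iff {𝕂 : Type*} [RCLike 𝕂]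
    (x : lp (fun _ : ℕ => 𝕂) ∞) :
    (∀ y : lp (fun _ : ℕ => 𝕂) ∞, BJInf y x → BJInf x y) ↔
      ∀ n : ℕ, ‖x n‖ = ‖x‖ := by
  constructor
  · -- right-symmetric → all coordinates norming
    intro hsym m
    by_contra hne
    have hm : ‖x m‖ < ‖x‖ :=
      lt_of_le_of_ne (lp.norm_apply_le_norm ENNReal.top_ne_zero x m) hne
    set c := ‖x‖ with hcdef
    set a : 𝕂 := x m with hadef
    have hc : 0 < c := (norm_nonneg _).trans_lt hm
    set σ : 𝕂 := if a = 0 then 1 else a / (‖a‖ : 𝕂) with hσdef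
    have hσ : ‖σ‖ = 1 := by
      rw [hσdef]
      split_ifs with h0
      · simp
      · rw [norm_div, RCLike.norm_ofReal, abs_of_nonneg (norm_nonneg a),
          div_self (norm_ne_zero_iff.mpr h0)]
    have halign : ∀ s : ℝ, 0 ≤ s → ‖a + (s : 𝕂) * σ‖ = ‖a‖ + s := by
      intro s hs
      rw [hσdef]
      split_ifs with h0
      · simp [h0, RCLike.norm_ofReal, abs_of_nonneg hs]
      · have hna : (‖a‖ : ℝ) ≠ 0 := norm_ne_zero_iff.mpr h0
        have : a + (s : 𝕂) * (a / (‖a‖ : 𝕂)) = a * (((1 : ℝ) + s / ‖a‖ : ℝ) : 𝕂) := by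
          push_cast
          field_simp
        rw [this, norm_mul, RCLike.norm_ofReal, abs_of_nonneg (by positivity)]
        field_simp
    -- the witness y
    set v : 𝕂 := a + (c : 𝕂) * σ with hvdef
    set y : lp (fun _ : ℕ => 𝕂) ∞ := lp.single ∞ m v - x with hydef
    have hym : y m = (c : 𝕂) * σ := by
      rw [hydef, lp_apply_sub, lp.single_apply_self, hvdef, ← hadef]
      ring
    have hyn : ∀ n, n ≠ m → y n = -x n := by
      intro n hn
      rw [hydef, lp_apply_sub, lp.single_apply_ne _ _ _ hn, zero_sub]
    have hvnorm : ‖a + (c : 𝕂) * σ‖ = ‖a‖ + c := halign c hc.le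
    -- y is BJ-orthogonal to x
    have hbj : BJInf y x := by
      intro μ
      have hynorm : ‖y‖ ≤ c := by
        apply lp.norm_le_of_forall_le hc.le
        intro n
        rcases eq_or_ne n m with rfl | hn
        · rw [hym, norm_mul, RCLike.norm_ofReal, abs_of_nonneg hc.le, hσ, mul_one]
        · rw [hyn n hn, norm_neg]
          exact lp.norm_apply_le_norm ENNReal.top_ne_zero x n
      refine le_trans hynorm ?_
      rcases le_or_gt ‖μ - 1‖ 1 with hμ | hμ
      · -- use coordinate m
        have hcm : (y + μ • x) m = (c : 𝕂) * σ + μ * a := by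
          rw [lp_apply_add_smul, hym, ← hadef]
        have hlow : c ≤ ‖(c : 𝕂) * σ + μ * a‖ := by
          have e : (c : 𝕂) * σ + μ * a = (a + (c : 𝕂) * σ) + (μ - 1) * a := by ring
          have : ‖a + (c : 𝕂) * σ‖ - ‖(μ - 1) * a‖ ≤ ‖(c : 𝕂) * σ + μ * a‖ := by
            rw [e]
            have h9 := norm_sub_norm_le (a + (c : 𝕂) * σ) (-((μ - 1) * a))
            rw [norm_neg, sub_neg_eq_add] at h9
            exact h9
          have h2 : ‖(μ - 1) * a‖ ≤ ‖a‖ := by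
            rw [norm_mul]
            calc ‖μ - 1‖ * ‖a‖ ≤ 1 * ‖a‖ :=
              mul_le_mul_of_nonneg_right hμ (norm_nonneg _)
            _ = ‖a‖ := one_mul _
          rw [hvnorm] at this
          linarith
        calc c ≤ ‖(y + μ • x) m‖ := by rw [hcm]; exact hlow
          _ ≤ ‖y + μ • x‖ := lp.norm_apply_le_norm ENNReal.top_ne_zero _ m
      · -- use far coordinates
        have hbound : ∀ n, ‖x n‖ ≤ max ‖a‖ ‖y + μ • x‖ := by
          intro n
          rcases eq_or_ne n m with rfl | hn
          · exact le_max_left _ _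
          · have hcn : (y + μ • x) n = (μ - 1) * x n := by
              rw [lp_apply_add_smul, hyn n hn]
              ring
            have : ‖x n‖ ≤ ‖(μ - 1) * x n‖ := by
              rw [norm_mul]
              nlinarith [norm_nonneg (x n)]
            refine le_max_of_le_right ?_
            rw [← hcn] at this
            exact this.trans (lp.norm_apply_le_norm ENNReal.top_ne_zero _ n)
        have hcle : c ≤ max ‖a‖ ‖y + μ • x‖ := by
          rw [hcdef]
          exact lp.norm_le_of_forall_le (le_max_of_le_left (norm_nonneg _)) hbound
        exact (le_max_iff.mp hcle).resolve_left (not_le.mpr hm)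
    -- but x is not BJ-orthogonal to y
    have hx := hsym y hbj
    set lam0 : ℝ := (c - ‖a‖) / (2 * c) with hlam0
    have hlam0pos : 0 < lam0 := by
      apply div_pos (by linarith) (by linarith)
    have hlam0lt : lam0 < 1 := by
      rw [hlam0, div_lt_one (by linarith)]
      nlinarith [norm_nonneg a]
    have hcontr := hx ((lam0 : ℝ) : 𝕂)
    have hub : ‖x + ((lam0 : ℝ) : 𝕂) • y‖ ≤ (c + ‖a‖) / 2 := by
      apply lp.norm_le_of_forall_le (by positivity)
      intro n
      rcases eq_or_ne n m with hn | hn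
      · rw [hn]
        have hcn : (x + ((lam0 : ℝ) : 𝕂) • y) m = a + ((lam0 * c : ℝ) : 𝕂) * σ := by
          rw [lp_apply_add_smul, hym, ← hadef]
          push_cast
          ring
        rw [hcn, halign (lam0 * c) (by positivity)]
        rw [hlam0]
        have : (c - ‖a‖) / (2 * c) * c = (c - ‖a‖) / 2 := by field_simp
        rw [this]
        linarith
      · have hcn : (x + ((lam0 : ℝ) : 𝕂) • y) n = ((1 - lam0 : ℝ) : 𝕂) * x n := by
          rw [lp_apply_add_smul, hyn n hn]
          push_cast
          ring
        rw [hcn, norm_mul, RCLike.norm_ofReal, abs_of_nonneg (by linarith)]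
        have hxn : ‖x n‖ ≤ c := lp.norm_apply_le_norm ENNReal.top_ne_zero x n
        have h1 : (1 - lam0) * ‖x n‖ ≤ (1 - lam0) * c :=
          mul_le_mul_of_nonneg_left hxn (by linarith)
        have h2 : (1 - lam0) * c = (c + ‖a‖) / 2 := by
          rw [hlam0]
          field_simp
          ring
        linarith
    have : c ≤ (c + ‖a‖) / 2 := le_trans hcontr hub
    linarith
  · -- all coordinates norming → right-symmetric
    intro h y hyx lam
    by_contra hcon
    push_neg at hcon
    set c := ‖x‖ with hcdef
    have hc : 0 < c := (norm_nonneg _).trans_lt hcon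
    have hlam : lam ≠ 0 := by
      rintro rfl
      rw [zero_smul, add_zero] at hcon
      exact lt_irrefl _ hcon
    set u : lp (fun _ : ℕ => 𝕂) ∞ := lam • y with hu
    set d := ‖x + u‖ with hd
    have hdc : d < c := hcon
    have hd0 : 0 ≤ d := norm_nonneg _
    set t : ℝ := (c - d) / c with ht
    have hcoord : ∀ n, ‖x n + u n‖ ≤ d := by
      intro n
      have h9 := lp.norm_apply_le_norm ENNReal.top_ne_zero (x + u) n
      rwa [lp_apply_add] at h9
    set S := ‖u‖ with hS
    have hSε : c - d ≤ S := by
      have h0 := hcoord 0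
      have h1 : ‖u 0‖ ≤ S := lp.norm_apply_le_norm ENNReal.top_ne_zero u 0
      have h2 : ‖x 0‖ = c := h 0
      have h3 : ‖x 0‖ ≤ ‖x 0 + u 0‖ + ‖u 0‖ := by
        calc ‖x 0‖ = ‖(x 0 + u 0) + (-(u 0))‖ := by
              congr 1
              ring
          _ ≤ ‖x 0 + u 0‖ + ‖-(u 0)‖ := norm_add_le _ _
          _ = ‖x 0 + u 0‖ + ‖u 0‖ := by rw [norm_neg]
      linarith
    have hkey : ∀ n, ‖(u + ((t : ℝ) : 𝕂) • x) n‖ ≤ Real.sqrt (S ^ 2 - (c - d) ^ 2) := by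
      intro n
      apply Real.le_sqrt_of_sq_le
      have hcn : (u + ((t : ℝ) : 𝕂) • x) n = u n + ((t : ℝ) : 𝕂) * x n :=
        lp_apply_add_smul u x _ n
      rw [hcn]
      exact coord_sq_bound (h n) (hcoord n)
        (lp.norm_apply_le_norm ENNReal.top_ne_zero u n) hdc.le hc
    have hsup : ‖u + ((t : ℝ) : 𝕂) • x‖ ≤ Real.sqrt (S ^ 2 - (c - d) ^ 2) :=
      lp.norm_le_of_forall_le (Real.sqrt_nonneg _) hkey
    have hSpos : 0 < S := lt_of_lt_of_le (by linarith) hSε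
    have hlt : Real.sqrt (S ^ 2 - (c - d) ^ 2) < S := by
      rw [Real.sqrt_lt' hSpos]
      nlinarith
    have hyineq := hyx (((t : ℝ) : 𝕂) / lam)
    have heq : lam • (y + (((t : ℝ) : 𝕂) / lam) • x) = u + ((t : ℝ) : 𝕂) • x := by
      rw [smul_add, smul_smul, mul_div_cancel₀ _ hlam, hu]
    have h3 : ‖u + ((t : ℝ) : 𝕂) • x‖ = ‖lam‖ * ‖y + (((t : ℝ) : 𝕂) / lam) • x‖ := by
      rw [← heq, norm_smul]
    have h4 : S = ‖lam‖ * ‖y‖ := by rw [hS, hu, norm_smul]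
    have hlamn : 0 < ‖lam‖ := norm_pos_iff.mpr hlam
    have h5 : ‖lam‖ * ‖y‖ ≤ ‖lam‖ * ‖y + (((t : ℝ) : 𝕂) / lam) • x‖ :=
      mul_le_mul_of_nonneg_left hyineq hlamn.le
    linarith
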